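/- Let q be a prime power, r a non-negative integer, and A₁, A₂ ∈ GL₂(F_q) with [A₁] ≠ [A₂] in PGL₂(F_q). If f ∈ F_q[x] is an irreducible polynomial dividing both F_{A₁,r} and F_{A₂,r}, then f has degree at most 2. -/

import Mathlib

open Polynomial

noncomputable section

namespace PGLAct

variable {F : Type} [Field F]

/-- The composition `A ∘ f = ∑ aᵢ (a x + c)^i (b x + d)^{k-i}` for `A = [[a,b],[c,d]]`. -/
def mcirc (A : Matrix (Fin 2) (Fin 2) F) (f : F[X]) : F[X] :=
  ∑ i ∈ Finset.range (f.natDegree + 1),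
    C (f.coeff i) * (C (A 0 0) * X + C (A 1 0)) ^ i *
      (C (A 0 1) * X + C (A 1 1)) ^ (f.natDegree - i)

/-- The composition `[A] ∘ f`: the monic normalization of `A ∘ f`. -/
def pcirc (A : Matrix (Fin 2) (Fin 2) F) (f : F[X]) : F[X] :=
  C (mcirc A f).leadingCoeff⁻¹ * mcirc A f

/-- The subgroup of scalar matrices in `GL₂(F)`. -/
def scalarSub (F : Type) [Field F] : Subgroup (GL (Fin 2) F) :=
  (Units.map ((Matrix.scalar (Fin 2)).toMonoidHom : F →* Matrix (Fin 2) (Fin 2) F)).range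

instance scalarSub_normal (F : Type) [Field F] : (scalarSub F).Normal := by
  constructor
  intro n hn g
  obtain ⟨u, hu⟩ := hn
  refine ⟨u, ?_⟩
  ext : 1
  have hcomm : Commute ((Matrix.scalar (Fin 2)) (u : F)) (g : Matrix (Fin 2) (Fin 2) F) :=
    Matrix.scalar_commute _ (fun r' => Commute.all _ r') _
  have hval : (n : Matrix (Fin 2) (Fin 2) F) = (Matrix.scalar (Fin 2)) (u : F) := by
    rw [← hu]; rfl
  calc ((Units.map ((Matrix.scalar (Fin 2)).toMonoidHom : F →* Matrix (Fin 2) (Fin 2) F)) u :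
        GL (Fin 2) F).val
      = (Matrix.scalar (Fin 2)) (u : F) := rfl
    _ = (g : Matrix (Fin 2) (Fin 2) F) * (Matrix.scalar (Fin 2)) (u : F)
        * ((g⁻¹ : GL (Fin 2) F) : Matrix (Fin 2) (Fin 2) F) := by
        rw [← hcomm.eq, mul_assoc, ← Units.val_mul, mul_inv_cancel]
        simp
    _ = ((g * n * g⁻¹ : GL (Fin 2) F) : Matrix (Fin 2) (Fin 2) F) := by
        simp [Units.val_mul, hval]

/-- `PGL₂(F)`, the projective general linear group. -/
def PGL2 (F : Type) [Field F] : Type := GL (Fin 2) F ⧸ scalarSub F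

instance : Group (PGL2 F) := inferInstanceAs (Group (GL (Fin 2) F ⧸ scalarSub F))

/-- The natural projection `GL₂(F) → PGL₂(F)`, `A ↦ [A]`. -/
def toPGL (F : Type) [Field F] : GL (Fin 2) F →* PGL2 F := QuotientGroup.mk' (scalarSub F)

/-- The polynomial `F_{A,r} = b x^{q^r+1} - a x^{q^r} + d x - c`. -/
def FAr [Fintype F] (A : Matrix (Fin 2) (Fin 2) F) (r : ℕ) : F[X] :=
  C (A 0 1) * X ^ (Fintype.card F ^ r + 1) - C (A 0 0) * X ^ (Fintype.card F ^ r)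
    + C (A 1 1) * X - C (A 1 0)


/-- The σ-product of `A = [[a,b],[c,d]]` and `A₀ = [[a₀,b₀],[c₀,d₀]]`. -/
def sigmaProd (A A0 : Matrix (Fin 2) (Fin 2) F) : Matrix (Fin 2) (Fin 2) F :=
  !![-(A 0 1 * (A0 0 0 * A0 1 0) - A 0 0 * (A0 0 0 * A0 1 1) + A 1 1 * (A0 1 0 * A0 0 1)
        - A 1 0 * (A0 0 1 * A0 1 1)),
     A 0 1 * A0 0 0 ^ 2 - A 0 0 * (A0 0 0 * A0 0 1) + A 1 1 * (A0 0 0 * A0 0 1)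
        - A 1 0 * A0 0 1 ^ 2;
     -(A 0 1 * A0 1 0 ^ 2 - A 0 0 * (A0 1 0 * A0 1 1) + A 1 1 * (A0 1 1 * A0 1 0)
        - A 1 0 * A0 1 1 ^ 2),
     A 0 1 * (A0 0 0 * A0 1 0) - A 0 0 * (A0 1 0 * A0 0 1) + A 1 1 * (A0 1 1 * A0 0 0)
        - A 1 0 * (A0 0 1 * A0 1 1)]

end PGLAct


/-- If `[A₁] ≠ [A₂]` and the irreducible polynomial `f` divides both
`F_{A₁,r}` and `F_{A₂,r}`, then `deg f ≤ 2`. -/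
theorem common_divisor_degree_le_two {F : Type} [Field F] [Fintype F] (r : ℕ)
    (A1 A2 : GL (Fin 2) F) (hne : PGLAct.toPGL F A1 ≠ PGLAct.toPGL F A2)
    (f : F[X]) (hirr : Irreducible f)
    (h1 : f ∣ PGLAct.FAr A1.val r) (h2 : f ∣ PGLAct.FAr A2.val r) :
    f.natDegree ≤ 2 := by
  set a1 := A1.val 0 0 with ha1
  set b1 := A1.val 0 1 with hb1
  set c1 := A1.val 1 0 with hc1
  set d1 := A1.val 1 1 with hd1
  set a2 := A2.val 0 0 with ha2
  set b2 := A2.val 0 1 with hb2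
  set c2 := A2.val 1 0 with hc2
  set d2 := A2.val 1 1 with hd2
  set g : F[X] := C (b2 * d1 - b1 * d2) * X ^ 2
      + C (b1 * c2 + a1 * d2 - b2 * c1 - a2 * d1) * X + C (a2 * c1 - a1 * c2) with hgdef
  have hg : g = (C b2 * X - C a2) * PGLAct.FAr A1.val r
      - (C b1 * X - C a1) * PGLAct.FAr A2.val r := by
    simp only [PGLAct.FAr, ← ha1, ← hb1, ← hc1, ← hd1, ← ha2, ← hb2, ← hc2, ← hd2,
      hgdef, pow_succ, map_sub, map_add, map_mul]
    ring
  have hfg : f ∣ g := by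
    rw [hg]
    exact dvd_sub (Dvd.dvd.mul_left h1 _) (Dvd.dvd.mul_left h2 _)
  by_cases hg0 : g = 0
  · exfalso
    -- extract the coefficient equations
    have h0 : a2 * c1 - a1 * c2 = 0 := by
      have := congrArg (fun p : F[X] => p.coeff 0) hg0
      simp only [hgdef, coeff_add, coeff_C_mul, coeff_X_pow, coeff_C, coeff_X,
        coeff_zero] at this
      simpa using this
    have hh1 : b1 * c2 + a1 * d2 - b2 * c1 - a2 * d1 = 0 := by
      have := congrArg (fun p : F[X] => p.coeff 1) hg0
      simp only [hgdef, coeff_add, coeff_C_mul, coeff_X_pow, coeff_C, coeff_X,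
        coeff_zero] at this
      simpa using this
    have hh2 : b2 * d1 - b1 * d2 = 0 := by
      have := congrArg (fun p : F[X] => p.coeff 2) hg0
      simp only [hgdef, coeff_add, coeff_C_mul, coeff_X_pow, coeff_C, coeff_X,
        coeff_zero] at this
      simpa using this
    -- determinants are nonzero
    have hdet1 : a1 * d1 - b1 * c1 ≠ 0 := by
      have hu : IsUnit (A1.val.det) := A1.isUnit.map (Matrix.detMonoidHom)
      rw [Matrix.det_fin_two] at hu
      exact hu.ne_zero
    have hdet2 : a2 * d2 - b2 * c2 ≠ 0 := by
      have hu : IsUnit (A2.val.det) := A2.isUnit.map (Matrix.detMonoidHom)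
      rw [Matrix.det_fin_two] at hu
      exact hu.ne_zero
    set lam : F := a1 * d2 - b2 * c1 with hlamdef
    set det2 : F := a2 * d2 - b2 * c2 with hdet2def
    have hA : lam * a2 = det2 * a1 := by linear_combination (-b2) * h0
    have hB : lam * b2 = det2 * b1 := by linear_combination b2 * hh1 + a2 * hh2
    have hC : lam * c2 = det2 * c1 := by linear_combination (-d2) * h0
    have hD : lam * d2 = det2 * d1 := by linear_combination d2 * hh1 + c2 * hh2
    have hlam : lam ≠ 0 := by
      intro hl
      rw [hl, zero_mul] at hA hB hC hD
      have ea : a1 = 0 := by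
        rcases mul_eq_zero.mp hA.symm with h | h
        · exact absurd (hdet2def ▸ h) hdet2
        · exact h
      have eb : b1 = 0 := by
        rcases mul_eq_zero.mp hB.symm with h | h
        · exact absurd (hdet2def ▸ h) hdet2
        · exact h
      have ec : c1 = 0 := by
        rcases mul_eq_zero.mp hC.symm with h | h
        · exact absurd (hdet2def ▸ h) hdet2
        · exact h
      have ed : d1 = 0 := by
        rcases mul_eq_zero.mp hD.symm with h | h
        · exact absurd (hdet2def ▸ h) hdet2
        · exact h
      apply hdet1
      rw [ea, eb, ec, ed]; ring
    set mu : F := lam⁻¹ * det2 with hmudef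
    have hmu : mu ≠ 0 := by
      apply mul_ne_zero (inv_ne_zero hlam) hdet2
    -- A2 = mu • A1
    have hmat : A2.val = mu • A1.val := by
      ext i j
      fin_cases i <;> fin_cases j <;>
        simp only [Matrix.smul_apply, smul_eq_mul, ← ha1, ← hb1, ← hc1, ← hd1,
          Fin.zero_eta, Fin.mk_one, ← ha2, ← hb2, ← hc2, ← hd2, hmudef]
      · rw [mul_assoc, ← hA, ← mul_assoc, inv_mul_cancel₀ hlam, one_mul]
      · rw [mul_assoc, ← hB, ← mul_assoc, inv_mul_cancel₀ hlam, one_mul]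
      · rw [mul_assoc, ← hC, ← mul_assoc, inv_mul_cancel₀ hlam, one_mul]
      · rw [mul_assoc, ← hD, ← mul_assoc, inv_mul_cancel₀ hlam, one_mul]
    apply hne
    have hmem : (Units.map ((Matrix.scalar (Fin 2)).toMonoidHom :
        F →* Matrix (Fin 2) (Fin 2) F)) (Units.mk0 mu hmu) ∈ PGLAct.scalarSub F :=
      ⟨Units.mk0 mu hmu, rfl⟩
    refine (QuotientGroup.mk'_eq_mk' _).mpr ⟨_, hmem, ?_⟩
    ext : 1
    show A1.val * (Matrix.scalar (Fin 2)) mu = A2.val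
    rw [hmat]
    ext i j
    simp [Matrix.mul_apply, Matrix.scalar_apply, Matrix.diagonal, Finset.sum_ite_eq,
      mul_comm]
  · have hdg : g.natDegree ≤ 2 := by
      rw [hgdef]
      compute_degree
    exact le_trans (Polynomial.natDegree_le_of_dvd hfg hg0) hdg
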